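/- For any density matrix ρ₁₂ on the tensor product H₁ ⊗ H₂ of two finite-dimensional Hilbert spaces, with partial traces ρ₁ = Tr₂ ρ₁₂ and ρ₂ = Tr₁ ρ₁₂, the mutual information satisfies S(ρ₁) + S(ρ₂) − S(ρ₁₂) ≥ −2 ln(1 − (1/2) Tr[(√ρ₁₂ − √(ρ₁ ⊗ ρ₂))²]). -/

import Mathlib

open Matrix Kronecker
open scoped ComplexOrder

noncomputable def mexp {n : Type*} [Fintype n] [DecidableEq n] (A : Matrix n n ℂ) : Matrix n n ℂ :=
  if h : A.IsHermitian then h.cfc Real.exp else 0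

noncomputable def mlog {n : Type*} [Fintype n] [DecidableEq n] (A : Matrix n n ℂ) : Matrix n n ℂ :=
  if h : A.IsHermitian then h.cfc Real.log else 0

open scoped Classical in
noncomputable def msqrt {n : Type*} [Fintype n] [DecidableEq n] (A : Matrix n n ℂ) : Matrix n n ℂ :=
  if h : A.PosSemidef then (h.1.eigenvectorUnitary : Matrix n n ℂ) *
    diagonal ((↑) ∘ Real.sqrt ∘ h.1.eigenvalues) * (star h.1.eigenvectorUnitary : Matrix n n ℂ) else 0

noncomputable def entropy {n : Type*} [Fintype n] [DecidableEq n] (ρ : Matrix n n ℂ) : ℝ :=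
  -((ρ * mlog ρ).trace.re)

noncomputable def relEnt {n : Type*} [Fintype n] [DecidableEq n] (ρ σ : Matrix n n ℂ) : ℝ :=
  ((ρ * (mlog ρ - mlog σ)).trace.re)

noncomputable def ptrace₂ {n m : Type*} [Fintype n] [Fintype m]
    (ρ : Matrix (n × m) (n × m) ℂ) : Matrix n n ℂ :=
  Matrix.of fun i j => ∑ k, ρ (i, k) (j, k)

noncomputable def ptrace₁ {n m : Type*} [Fintype n] [Fintype m]
    (ρ : Matrix (n × m) (n × m) ℂ) : Matrix m m ℂ :=
  Matrix.of fun i j => ∑ k, ρ (k, i) (k, j)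

noncomputable def traceNorm {n : Type*} [Fintype n] [DecidableEq n] (A : Matrix n n ℂ) : ℝ :=
  ((((Matrix.posSemidef_conjTranspose_mul_self A).1.eigenvectorUnitary : Matrix n n ℂ) *
    diagonal (((↑) : ℝ → ℂ) ∘ Real.sqrt ∘ (Matrix.posSemidef_conjTranspose_mul_self A).1.eigenvalues) *
    (star (Matrix.posSemidef_conjTranspose_mul_self A).1.eigenvectorUnitary : Matrix n n ℂ)).trace).re

section Aux

set_option linter.unusedSectionVars false

variable {N : Type*} [Fintype N] [DecidableEq N]
variable {n m : Type*} [Fintype n] [DecidableEq n] [Fintype m] [DecidableEq m]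

lemma aux_trace_diag_conj (W : Matrix N N ℂ) (a b : N → ℂ) :
    (diagonal a * W * diagonal b * star W).trace
      = ∑ k, ∑ s, a k * b s * (W k s * star (W k s)) := by
  have h : ∀ k s, (diagonal a * W * diagonal b) k s = a k * W k s * b s := by
    intro k s
    simp [Matrix.mul_diagonal, Matrix.diagonal_mul]
  simp only [Matrix.trace, Matrix.diag, Matrix.mul_apply, h, Matrix.star_apply]
  refine Finset.sum_congr rfl fun k _ => Finset.sum_congr rfl fun s _ => by ring

lemma aux_trace_conj_pair (U V : Matrix N N ℂ) (a b : N → ℂ) :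
    ((U * diagonal a * star U) * (V * diagonal b * star V)).trace
      = ∑ k, ∑ s, a k * b s * ((star U * V) k s * star ((star U * V) k s)) := by
  have e1 : (U * diagonal a * star U) * (V * diagonal b * star V)
      = U * (diagonal a * star U * (V * diagonal b * star V)) := by
    simp only [Matrix.mul_assoc]
  rw [e1, Matrix.trace_mul_comm]
  have e2 : (diagonal a * star U * (V * diagonal b * star V)) * U
      = diagonal a * (star U * V) * diagonal b * star (star U * V) := by
    simp only [StarMul.star_mul, star_star, Matrix.mul_assoc]
  rw [e2, aux_trace_diag_conj]

lemma aux_trace_conj_one (U : Matrix N N ℂ) (hU : star U * U = 1) (a : N → ℂ) :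
    (U * diagonal a * star U).trace = ∑ k, a k := by
  rw [Matrix.mul_assoc, Matrix.trace_mul_comm, Matrix.mul_assoc, hU, Matrix.mul_one,
    Matrix.trace_diagonal]

lemma aux_conj_mul_conj (U : Matrix N N ℂ) (hU : star U * U = 1) (a b : N → ℂ) :
    (U * diagonal a * star U) * (U * diagonal b * star U)
      = U * diagonal (fun k => a k * b k) * star U := by
  have e1 : (U * diagonal a * star U) * (U * diagonal b * star U)
      = U * (diagonal a * ((star U * U) * (diagonal b * star U))) := by
    simp only [Matrix.mul_assoc]
  rw [e1, hU, Matrix.one_mul]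
  have e2 : U * (diagonal a * (diagonal b * star U))
      = U * (diagonal a * diagonal b) * star U := by
    simp only [Matrix.mul_assoc]
  rw [e2, Matrix.diagonal_mul_diagonal]

lemma aux_star_kronecker (A : Matrix n n ℂ) (B : Matrix m m ℂ) :
    star (A ⊗ₖ B) = star A ⊗ₖ star B := by
  ext ⟨i, j⟩ ⟨k, l⟩
  simp only [Matrix.star_apply, Matrix.kroneckerMap_apply, star_mul']

lemma aux_sum_rot {α β γ : Type*} [Fintype α] [Fintype β] [Fintype γ] (f : α → β → γ → ℂ) :
    ∑ i, ∑ j, ∑ k, f i j k = ∑ k, ∑ i, ∑ j, f i j k :=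
  (Finset.sum_congr rfl fun i _ => Finset.sum_comm).trans Finset.sum_comm

lemma aux_trace_ptrace₂ (ρ : Matrix (n × m) (n × m) ℂ) : (ptrace₂ ρ).trace = ρ.trace := by
  simp [Matrix.trace, ptrace₂, Matrix.diag, Fintype.sum_prod_type]

lemma aux_trace_ptrace₁ (ρ : Matrix (n × m) (n × m) ℂ) : (ptrace₁ ρ).trace = ρ.trace := by
  rw [Matrix.trace, Matrix.trace, Fintype.sum_prod_type, Finset.sum_comm]
  simp [ptrace₁, Matrix.diag]

lemma aux_trace_mul_kron_one (ρ : Matrix (n × m) (n × m) ℂ) (A : Matrix n n ℂ) :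
    (ρ * (A ⊗ₖ (1 : Matrix m m ℂ))).trace = (ptrace₂ ρ * A).trace := by
  simp only [Matrix.trace, Matrix.diag, Matrix.mul_apply, Matrix.kroneckerMap_apply,
    ptrace₂, Matrix.of_apply, Fintype.sum_prod_type, Matrix.one_apply]
  simp only [mul_ite, mul_one, mul_zero, Finset.sum_ite_eq', Finset.mem_univ, if_true]
  refine Finset.sum_congr rfl fun i _ => ?_
  rw [Finset.sum_comm]
  refine Finset.sum_congr rfl fun j _ => ?_
  rw [Finset.sum_mul]

lemma aux_trace_mul_one_kron (ρ : Matrix (n × m) (n × m) ℂ) (B : Matrix m m ℂ) :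
    (ρ * ((1 : Matrix n n ℂ) ⊗ₖ B)).trace = (ptrace₁ ρ * B).trace := by
  simp only [Matrix.trace, Matrix.diag, Matrix.mul_apply, Matrix.kroneckerMap_apply,
    ptrace₁, Matrix.of_apply, Fintype.sum_prod_type, Matrix.one_apply]
  simp only [ite_mul, one_mul, zero_mul, mul_ite, mul_zero,
    Finset.sum_ite_eq', Finset.sum_ite_eq, Finset.sum_ite_irrel, Finset.sum_const_zero,
    Finset.mem_univ, if_true]
  simp only [Finset.sum_mul]
  rw [aux_sum_rot, aux_sum_rot]

lemma aux_ptrace₂_psd {ρ : Matrix (n × m) (n × m) ℂ} (hρ : ρ.PosSemidef) :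
    (ptrace₂ ρ).PosSemidef := by
  rw [Matrix.posSemidef_iff_dotProduct_mulVec]
  constructor
  · ext i j
    simp only [Matrix.conjTranspose_apply, ptrace₂, Matrix.of_apply, star_sum]
    refine Finset.sum_congr rfl fun k _ => ?_
    exact (Matrix.conjTranspose_apply ρ _ _).symm.trans (by rw [hρ.1])
  · intro x
    have key : dotProduct (star x) ((ptrace₂ ρ).mulVec x)
        = ∑ k : m, dotProduct (star (fun a : n × m => if a.2 = k then x a.1 else 0))
            (ρ.mulVec (fun a : n × m => if a.2 = k then x a.1 else 0)) := by
      simp only [dotProduct, Matrix.mulVec, dotProduct, ptrace₂, Matrix.of_apply,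
        Pi.star_apply, Fintype.sum_prod_type, apply_ite, star_zero, ite_mul, mul_ite,
        zero_mul, mul_zero, Finset.sum_ite_eq', Finset.sum_ite_eq, Finset.sum_ite_irrel,
        Finset.sum_const_zero, Finset.mem_univ, if_true]
      simp only [Finset.sum_mul, Finset.mul_sum]
      rw [aux_sum_rot]
    rw [key]
    exact Finset.sum_nonneg fun k _ => (Matrix.posSemidef_iff_dotProduct_mulVec.mp hρ).2 _

lemma aux_ptrace₁_psd {ρ : Matrix (n × m) (n × m) ℂ} (hρ : ρ.PosSemidef) :
    (ptrace₁ ρ).PosSemidef := by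
  rw [Matrix.posSemidef_iff_dotProduct_mulVec]
  constructor
  · ext i j
    simp only [Matrix.conjTranspose_apply, ptrace₁, Matrix.of_apply, star_sum]
    refine Finset.sum_congr rfl fun k _ => ?_
    exact (Matrix.conjTranspose_apply ρ _ _).symm.trans (by rw [hρ.1])
  · intro x
    have key : dotProduct (star x) ((ptrace₁ ρ).mulVec x)
        = ∑ k : n, dotProduct (star (fun a : n × m => if a.1 = k then x a.2 else 0))
            (ρ.mulVec (fun a : n × m => if a.1 = k then x a.2 else 0)) := by
      simp only [dotProduct, Matrix.mulVec, dotProduct, ptrace₁, Matrix.of_apply,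
        Pi.star_apply, Fintype.sum_prod_type, apply_ite, star_zero, ite_mul, mul_ite,
        zero_mul, mul_zero, Finset.sum_ite_eq', Finset.sum_ite_eq, Finset.sum_ite_irrel,
        Finset.sum_const_zero, Finset.mem_univ, if_true]
      simp only [Finset.sum_mul, Finset.mul_sum]
      rw [aux_sum_rot]
    rw [key]
    exact Finset.sum_nonneg fun k _ => (Matrix.posSemidef_iff_dotProduct_mulVec.mp hρ).2 _

lemma aux_psd_conj (V : Matrix N N ℂ) (c : N → ℝ) (hc : ∀ k, 0 ≤ c k) :
    (V * diagonal (fun k => ((c k : ℝ) : ℂ)) * star V).PosSemidef := by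
  have h : (diagonal (fun k => ((c k : ℝ) : ℂ))).PosSemidef :=
    Matrix.posSemidef_diagonal_iff.mpr fun i => Complex.zero_le_real.mpr (hc i)
  have h2 := h.mul_mul_conjTranspose_same V
  rwa [← Matrix.star_eq_conjTranspose] at h2

lemma aux_kron_diag_left (U₁ : Matrix n n ℂ) (U₂ : Matrix m m ℂ) (hU₂ : U₂ * star U₂ = 1)
    (d : n → ℂ) :
    (U₁ * diagonal d * star U₁) ⊗ₖ (1 : Matrix m m ℂ)
      = (U₁ ⊗ₖ U₂) * diagonal (fun s : n × m => d s.1) * star (U₁ ⊗ₖ U₂) := by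
  have h1 : diagonal (fun s : n × m => d s.1)
      = diagonal d ⊗ₖ diagonal (fun _ : m => (1 : ℂ)) := by
    rw [Matrix.diagonal_kronecker_diagonal]
    simp
  rw [h1, aux_star_kronecker, ← Matrix.mul_kronecker_mul, ← Matrix.mul_kronecker_mul,
    Matrix.diagonal_one, Matrix.mul_one, hU₂]

lemma aux_kron_diag_right (U₁ : Matrix n n ℂ) (U₂ : Matrix m m ℂ) (hU₁ : U₁ * star U₁ = 1)
    (d : m → ℂ) :
    (1 : Matrix n n ℂ) ⊗ₖ (U₂ * diagonal d * star U₂)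
      = (U₁ ⊗ₖ U₂) * diagonal (fun s : n × m => d s.2) * star (U₁ ⊗ₖ U₂) := by
  have h1 : diagonal (fun s : n × m => d s.2)
      = diagonal (fun _ : n => (1 : ℂ)) ⊗ₖ diagonal d := by
    rw [Matrix.diagonal_kronecker_diagonal]
    simp
  rw [h1, aux_star_kronecker, ← Matrix.mul_kronecker_mul, ← Matrix.mul_kronecker_mul,
    Matrix.diagonal_one, Matrix.mul_one, hU₁]

lemma aux_sum_cast (f g : N → ℝ) (c : N → N → ℝ) :
    ∑ k, ∑ s, ((f k : ℂ)) * (g s : ℂ) * ((c k s : ℝ) : ℂ)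
      = ((∑ k, ∑ s, f k * g s * c k s : ℝ) : ℂ) := by
  push_cast
  rfl


end Aux

section Aux2
variable {N : Type*} [Fintype N] [DecidableEq N]

lemma aux_key (U V : Matrix N N ℂ) (a f : N → ℝ) :
    ((U * diagonal (fun k => ((a k : ℝ) : ℂ)) * star U)
        * (V * diagonal (fun s => ((f s : ℝ) : ℂ)) * star V)).trace
      = ((∑ k, ∑ s, a k * f s * Complex.normSq ((star U * V) k s) : ℝ) : ℂ) := by
  rw [aux_trace_conj_pair]
  push_cast
  refine Finset.sum_congr rfl fun k _ => Finset.sum_congr rfl fun s _ => ?_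
  rw [Complex.star_def, Complex.mul_conj]

lemma aux_spectral {A : Matrix N N ℂ} (hA : A.PosSemidef) :
    ∃ (U : Matrix N N ℂ) (a : N → ℝ), star U * U = 1 ∧ U * star U = 1 ∧ (∀ k, 0 ≤ a k) ∧
      A = U * diagonal (fun k => ((a k : ℝ) : ℂ)) * star U ∧
      (hA.1.eigenvectorUnitary : Matrix N N ℂ) * diagonal ((↑) ∘ Real.sqrt ∘ hA.1.eigenvalues) *
        (star hA.1.eigenvectorUnitary : Matrix N N ℂ) = U * diagonal (fun k => ((Real.sqrt (a k) : ℝ) : ℂ)) * star U ∧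
      hA.1.cfc Real.log = U * diagonal (fun k => ((Real.log (a k) : ℝ) : ℂ)) * star U :=
  ⟨(hA.1.eigenvectorUnitary : Matrix N N ℂ), hA.1.eigenvalues,
    Matrix.mem_unitaryGroup_iff'.mp hA.1.eigenvectorUnitary.2,
    Matrix.mem_unitaryGroup_iff.mp hA.1.eigenvectorUnitary.2,
    hA.eigenvalues_nonneg, hA.1.spectral_theorem, rfl, rfl⟩

end Aux2


lemma aux_final {ι κ : Type*} [Fintype ι] [Fintype κ] (r : ι → ℝ) (gp gq : κ → ℝ)
    (c : ι → κ → ℝ)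
    (hr : ∀ i, 0 ≤ r i) (hp : ∀ s, 0 ≤ gp s) (hq : ∀ s, 0 ≤ gq s) (hc : ∀ i s, 0 ≤ c i s)
    (hw1 : ∑ i, ∑ s, r i * c i s = 1)
    (hsupp1 : ∀ i s, gp s = 0 → r i * c i s = 0)
    (hsupp2 : ∀ i s, gq s = 0 → r i * c i s = 0) :
    (∑ i, ∑ s, r i * Real.log (r i) * c i s)
      - (∑ i, ∑ s, r i * Real.log (gp s) * c i s)
      - (∑ i, ∑ s, r i * Real.log (gq s) * c i s)
    ≥ -2 * Real.log (∑ i, ∑ s, Real.sqrt (r i) * Real.sqrt (gp s * gq s) * c i s) := by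
  classical
  set w : ι × κ → ℝ := fun x => r x.1 * c x.1 x.2 with hwdef
  set xv : ι × κ → ℝ := fun x => Real.sqrt (gp x.2 * gq x.2 / r x.1) with hxvdef
  set T : Finset (ι × κ) := Finset.univ.filter (fun x => w x ≠ 0) with hTdef
  have hw0 : ∀ x : ι × κ, 0 ≤ w x := fun x => mul_nonneg (hr _) (hc _ _)
  have hTprop : ∀ x ∈ T, 0 < r x.1 ∧ 0 < gp x.2 ∧ 0 < gq x.2 ∧ 0 < c x.1 x.2 := by
    intro x hx
    rw [hTdef, Finset.mem_filter] at hx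
    have hwne : w x ≠ 0 := hx.2
    have hrne : r x.1 ≠ 0 := fun h => hwne (by simp [hwdef, h])
    have hcne : c x.1 x.2 ≠ 0 := fun h => hwne (by simp [hwdef, h])
    have hpne : gp x.2 ≠ 0 := fun h => hwne (hsupp1 x.1 x.2 h)
    have hqne : gq x.2 ≠ 0 := fun h => hwne (hsupp2 x.1 x.2 h)
    exact ⟨(hr _).lt_of_ne (Ne.symm hrne), (hp _).lt_of_ne (Ne.symm hpne),
      (hq _).lt_of_ne (Ne.symm hqne), (hc _ _).lt_of_ne (Ne.symm hcne)⟩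
  have hprod : ∀ F : ι → κ → ℝ, (∑ x : ι × κ, F x.1 x.2) = ∑ i, ∑ s, F i s := fun F =>
    Fintype.sum_prod_type (f := fun x : ι × κ => F x.1 x.2)
  have hsumT : ∑ x ∈ T, w x = 1 := by
    rw [hTdef, Finset.sum_filter_ne_zero, ← hw1, ← hprod (fun i s => r i * c i s)]
  have hteq : ∑ i, ∑ s, Real.sqrt (r i) * Real.sqrt (gp s * gq s) * c i s
      = ∑ x ∈ T, w x * xv x := by
    rw [← hprod (fun i s => Real.sqrt (r i) * Real.sqrt (gp s * gq s) * c i s)]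
    rw [← Finset.sum_subset (Finset.filter_subset (fun x => w x ≠ 0) Finset.univ)
      (fun x _ hx => ?_)]
    · refine Finset.sum_congr rfl fun x hx => ?_
      obtain ⟨hrp, hpp, hqp, hcp⟩ := hTprop x hx
      have hgg : (0:ℝ) ≤ gp x.2 * gq x.2 := le_of_lt (mul_pos hpp hqp)
      have h1 : xv x = Real.sqrt (gp x.2 * gq x.2) / Real.sqrt (r x.1) :=
        Real.sqrt_div hgg _
      calc Real.sqrt (r x.1) * Real.sqrt (gp x.2 * gq x.2) * c x.1 x.2
          = c x.1 x.2 * Real.sqrt (gp x.2 * gq x.2) * (r x.1 / Real.sqrt (r x.1)) := by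
            rw [Real.div_sqrt]; ring
        _ = w x * xv x := by simp only [hwdef, h1]; ring
    · simp only [hTdef, Finset.mem_filter, Finset.mem_univ, true_and, not_not] at hx
      have : r x.1 * c x.1 x.2 = 0 := hx
      rcases mul_eq_zero.mp this with h | h
      · rw [h, Real.sqrt_zero]; ring
      · rw [h]; ring
  have hmem : ∀ x ∈ T, xv x ∈ Set.Ioi (0:ℝ) := by
    intro x hx
    obtain ⟨hrp, hpp, hqp, _⟩ := hTprop x hx
    exact Real.sqrt_pos.mpr (div_pos (mul_pos hpp hqp) hrp)
  have jensen := (strictConcaveOn_log_Ioi.concaveOn).le_map_sum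
    (fun x _ => hw0 x) hsumT hmem
  simp only [smul_eq_mul] at jensen
  have hlogx : ∀ x ∈ T, Real.log (xv x)
      = (Real.log (gp x.2) + Real.log (gq x.2) - Real.log (r x.1)) / 2 := by
    intro x hx
    obtain ⟨hrp, hpp, hqp, _⟩ := hTprop x hx
    rw [hxvdef]
    simp only
    rw [Real.log_sqrt (div_nonneg (le_of_lt (mul_pos hpp hqp)) (le_of_lt hrp)),
      Real.log_div (ne_of_gt (mul_pos hpp hqp)) (ne_of_gt hrp),
      Real.log_mul (ne_of_gt hpp) (ne_of_gt hqp)]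
  have hLHS : (∑ i, ∑ s, r i * Real.log (r i) * c i s)
      - (∑ i, ∑ s, r i * Real.log (gp s) * c i s)
      - (∑ i, ∑ s, r i * Real.log (gq s) * c i s)
      = ∑ x ∈ T, (-2) * (w x * Real.log (xv x)) := by
    rw [← hprod (fun i s => r i * Real.log (r i) * c i s),
      ← hprod (fun i s => r i * Real.log (gp s) * c i s),
      ← hprod (fun i s => r i * Real.log (gq s) * c i s),
      ← Finset.sum_sub_distrib, ← Finset.sum_sub_distrib]
    rw [← Finset.sum_subset (Finset.filter_subset (fun x => w x ≠ 0) Finset.univ)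
      (fun x _ hx => ?_)]
    · refine Finset.sum_congr rfl fun x hx => ?_
      rw [hlogx x hx]
      simp only [hwdef]
      ring
    · simp only [hTdef, Finset.mem_filter, Finset.mem_univ, true_and, not_not] at hx
      have h0 : r x.1 * c x.1 x.2 = 0 := hx
      have e : ∀ a : ℝ, r x.1 * a * c x.1 x.2 = a * (r x.1 * c x.1 x.2) := fun a => by ring
      rw [e, e, e, h0]
      ring
  rw [hLHS, hteq]
  have : ∑ x ∈ T, (-2) * (w x * Real.log (xv x)) = (-2) * ∑ x ∈ T, w x * Real.log (xv x) := by
    rw [Finset.mul_sum]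
  rw [this]
  have h2 : ∑ x ∈ T, w x * Real.log (xv x) ≤ Real.log (∑ x ∈ T, w x * xv x) := jensen
  linarith


theorem stmt0 {n m : Type*} [Fintype n] [DecidableEq n] [Fintype m] [DecidableEq m]
    (ρ₁₂ : Matrix (n × m) (n × m) ℂ) (hρ : ρ₁₂.PosSemidef) (htr : ρ₁₂.trace = 1) :
    entropy (ptrace₂ ρ₁₂) + entropy (ptrace₁ ρ₁₂) - entropy ρ₁₂ ≥
      -2 * Real.log (1 - (1/2) *
        (((msqrt ρ₁₂ - msqrt (ptrace₂ ρ₁₂ ⊗ₖ ptrace₁ ρ₁₂)) ^ 2).trace.re)) := by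
  classical
  have hρ1 : (ptrace₂ ρ₁₂).PosSemidef := aux_ptrace₂_psd hρ
  have hρ2 : (ptrace₁ ρ₁₂).PosSemidef := aux_ptrace₁_psd hρ
  have htr1 : (ptrace₂ ρ₁₂).trace = 1 := by rw [aux_trace_ptrace₂, htr]
  have htr2 : (ptrace₁ ρ₁₂).trace = 1 := by rw [aux_trace_ptrace₁, htr]
  obtain ⟨U, r, hUu, hUu', hr0, hρspec, hρsqrt, hρlog⟩ := aux_spectral hρ
  obtain ⟨U₁, p, hU1u, hU1u', hp0, hρ1spec, hρ1sqrt, hρ1log⟩ := aux_spectral hρ1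
  obtain ⟨U₂, q, hU2u, hU2u', hq0, hρ2spec, hρ2sqrt, hρ2log⟩ := aux_spectral hρ2
  set c : (n × m) → (n × m) → ℝ :=
    fun k s => Complex.normSq ((star U * (U₁ ⊗ₖ U₂)) k s) with hcdef
  have hc0 : ∀ k s, 0 ≤ c k s := fun k s => Complex.normSq_nonneg _
  have hVs : star (U₁ ⊗ₖ U₂) = star U₁ ⊗ₖ star U₂ := aux_star_kronecker U₁ U₂
  have hVu : star (U₁ ⊗ₖ U₂) * (U₁ ⊗ₖ U₂) = 1 := by
    rw [hVs, ← Matrix.mul_kronecker_mul, hU1u, hU2u, Matrix.one_kronecker_one]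
  have hVu' : (U₁ ⊗ₖ U₂) * star (U₁ ⊗ₖ U₂) = 1 := by
    rw [hVs, ← Matrix.mul_kronecker_mul, hU1u', hU2u', Matrix.one_kronecker_one]
  -- spectral form of the kronecker product state
  have hσspec : ptrace₂ ρ₁₂ ⊗ₖ ptrace₁ ρ₁₂
      = (U₁ ⊗ₖ U₂) * diagonal (fun s : n × m => ((p s.1 * q s.2 : ℝ) : ℂ))
          * star (U₁ ⊗ₖ U₂) := by
    rw [hρ1spec, hρ2spec, Matrix.mul_kronecker_mul, Matrix.mul_kronecker_mul,
      Matrix.diagonal_kronecker_diagonal, ← hVs]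
    have hd : (fun s : n × m => ((p s.1 : ℝ) : ℂ) * ((q s.2 : ℝ) : ℂ))
        = fun s : n × m => ((p s.1 * q s.2 : ℝ) : ℂ) := by
      funext s; push_cast; ring
    rw [hd]
  have hσ : (ptrace₂ ρ₁₂ ⊗ₖ ptrace₁ ρ₁₂).PosSemidef := by
    rw [hσspec]
    exact aux_psd_conj _ _ (fun s => mul_nonneg (hp0 s.1) (hq0 s.2))
  -- row sums of c are one
  have hWW : (star U * (U₁ ⊗ₖ U₂)) * star (star U * (U₁ ⊗ₖ U₂)) = 1 := by
    rw [StarMul.star_mul, star_star]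
    have e : star U * (U₁ ⊗ₖ U₂) * (star (U₁ ⊗ₖ U₂) * U)
        = star U * ((U₁ ⊗ₖ U₂) * star (U₁ ⊗ₖ U₂)) * U := by
      simp only [Matrix.mul_assoc]
    rw [e, hVu', Matrix.mul_one, hUu]
  have hrow : ∀ k, ∑ s, c k s = 1 := by
    intro k
    have h1 : ((star U * (U₁ ⊗ₖ U₂)) * star (star U * (U₁ ⊗ₖ U₂))) k k
        = (1 : Matrix (n × m) (n × m) ℂ) k k := by rw [hWW]
    rw [Matrix.mul_apply, Matrix.one_apply_eq] at h1
    have h2 : ∑ s, ((c k s : ℝ) : ℂ) = 1 := by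
      rw [← h1]
      refine Finset.sum_congr rfl fun s _ => ?_
      rw [Matrix.star_apply, hcdef, Complex.star_def, Complex.mul_conj]
    exact_mod_cast h2
  -- eigenvalue sums
  have hsum_r : ∑ k, r k = 1 := by
    have h := htr
    rw [hρspec, aux_trace_conj_one U hUu] at h
    exact_mod_cast h
  -- generic trace computations
  have keyf : ∀ f : (n × m) → ℝ,
      (ρ₁₂ * ((U₁ ⊗ₖ U₂) * diagonal (fun s => ((f s : ℝ) : ℂ)) * star (U₁ ⊗ₖ U₂))).trace
        = ((∑ k, ∑ s, r k * f s * c k s : ℝ) : ℂ) := by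
    intro f
    conv_lhs => rw [hρspec]
    exact aux_key U (U₁ ⊗ₖ U₂) r f
  have hkeyρ : ∀ f : (n × m) → ℝ,
      (ρ₁₂ * (U * diagonal (fun k => ((f k : ℝ) : ℂ)) * star U)).trace
        = ((∑ k, r k * f k : ℝ) : ℂ) := by
    intro f
    conv_lhs => rw [hρspec]
    rw [aux_conj_mul_conj U hUu, aux_trace_conj_one U hUu]
    push_cast
    rfl
  have hkey1 : ∀ f : n → ℝ,
      ((ptrace₂ ρ₁₂) * (U₁ * diagonal (fun i => ((f i : ℝ) : ℂ)) * star U₁)).trace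
        = ((∑ i, p i * f i : ℝ) : ℂ) := by
    intro f
    conv_lhs => rw [hρ1spec]
    rw [aux_conj_mul_conj U₁ hU1u, aux_trace_conj_one U₁ hU1u]
    push_cast
    rfl
  have hkey2 : ∀ f : m → ℝ,
      ((ptrace₁ ρ₁₂) * (U₂ * diagonal (fun j => ((f j : ℝ) : ℂ)) * star U₂)).trace
        = ((∑ j, q j * f j : ℝ) : ℂ) := by
    intro f
    conv_lhs => rw [hρ2spec]
    rw [aux_conj_mul_conj U₂ hU2u, aux_trace_conj_one U₂ hU2u]
    push_cast
    rfl
  -- entropies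
  have hmlogρ : mlog ρ₁₂ = U * diagonal (fun k => ((Real.log (r k) : ℝ) : ℂ)) * star U := by
    unfold mlog
    rw [dif_pos hρ.1]
    exact hρlog
  have hmlog1 : mlog (ptrace₂ ρ₁₂)
      = U₁ * diagonal (fun i => ((Real.log (p i) : ℝ) : ℂ)) * star U₁ := by
    unfold mlog
    rw [dif_pos hρ1.1]
    exact hρ1log
  have hmlog2 : mlog (ptrace₁ ρ₁₂)
      = U₂ * diagonal (fun j => ((Real.log (q j) : ℝ) : ℂ)) * star U₂ := by
    unfold mlog
    rw [dif_pos hρ2.1]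
    exact hρ2log
  have hent0 : entropy ρ₁₂ = -(∑ k, r k * Real.log (r k)) := by
    rw [entropy, hmlogρ, hkeyρ (fun k => Real.log (r k)), Complex.ofReal_re]
  have hent1 : entropy (ptrace₂ ρ₁₂) = -(∑ i, p i * Real.log (p i)) := by
    rw [entropy, hmlog1, hkey1 (fun i => Real.log (p i)), Complex.ofReal_re]
  have hent2 : entropy (ptrace₁ ρ₁₂) = -(∑ j, q j * Real.log (q j)) := by
    rw [entropy, hmlog2, hkey2 (fun j => Real.log (q j)), Complex.ofReal_re]
  -- transport the marginal entropies to the joint eigenbasis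
  have hS1 : ∑ i, p i * Real.log (p i)
      = ∑ k, ∑ s, r k * Real.log (p s.1) * c k s := by
    have e3 := aux_kron_diag_left U₁ U₂ hU2u' (fun i => ((Real.log (p i) : ℝ) : ℂ))
    have e4 := aux_trace_mul_kron_one ρ₁₂
      (U₁ * diagonal (fun i => ((Real.log (p i) : ℝ) : ℂ)) * star U₁)
    have echain : ((∑ i, p i * Real.log (p i) : ℝ) : ℂ)
        = ((∑ k, ∑ s, r k * Real.log (p s.1) * c k s : ℝ) : ℂ) := by
      rw [← hkey1 (fun i => Real.log (p i)), ← e4, e3, keyf (fun s => Real.log (p s.1))]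
    exact_mod_cast echain
  have hS2 : ∑ j, q j * Real.log (q j)
      = ∑ k, ∑ s, r k * Real.log (q s.2) * c k s := by
    have e3 := aux_kron_diag_right U₁ U₂ hU1u' (fun j => ((Real.log (q j) : ℝ) : ℂ))
    have e4 := aux_trace_mul_one_kron ρ₁₂
      (U₂ * diagonal (fun j => ((Real.log (q j) : ℝ) : ℂ)) * star U₂)
    have echain : ((∑ j, q j * Real.log (q j) : ℝ) : ℂ)
        = ((∑ k, ∑ s, r k * Real.log (q s.2) * c k s : ℝ) : ℂ) := by
      rw [← hkey2 (fun j => Real.log (q j)), ← e4, e3, keyf (fun s => Real.log (q s.2))]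
    exact_mod_cast echain
  have hSρ : ∑ k, r k * Real.log (r k)
      = ∑ k, ∑ s, r k * Real.log (r k) * c k s := by
    refine Finset.sum_congr rfl fun k _ => ?_
    calc r k * Real.log (r k) = (r k * Real.log (r k)) * ∑ s, c k s := by
          rw [hrow k, mul_one]
      _ = ∑ s, r k * Real.log (r k) * c k s := by rw [Finset.mul_sum]
  have hw1 : ∑ k, ∑ s, r k * c k s = 1 := by
    calc ∑ k, ∑ s, r k * c k s = ∑ k, r k * ∑ s, c k s := by
          refine Finset.sum_congr rfl fun k _ => ?_
          rw [Finset.mul_sum]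
      _ = ∑ k, r k := by
          refine Finset.sum_congr rfl fun k _ => ?_
          rw [hrow k, mul_one]
      _ = 1 := hsum_r
  -- support conditions
  have hsupp1 : ∀ k s, p s.1 = 0 → r k * c k s = 0 := by
    intro k0 s0 hps
    have e3 := aux_kron_diag_left U₁ U₂ hU2u'
      (fun i => ((if i = s0.1 then (1:ℝ) else 0 : ℝ) : ℂ))
    have e4 := aux_trace_mul_kron_one ρ₁₂
      (U₁ * diagonal (fun i => ((if i = s0.1 then (1:ℝ) else 0 : ℝ) : ℂ)) * star U₁)
    have echain : ((∑ i, p i * (if i = s0.1 then (1:ℝ) else 0) : ℝ) : ℂ)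
        = ((∑ k, ∑ s, r k * (if s.1 = s0.1 then (1:ℝ) else 0) * c k s : ℝ) : ℂ) := by
      rw [← hkey1 (fun i => if i = s0.1 then (1:ℝ) else 0), ← e4, e3,
        keyf (fun s => if s.1 = s0.1 then (1:ℝ) else 0)]
    have hre : ∑ k, ∑ s, r k * (if s.1 = s0.1 then (1:ℝ) else 0) * c k s
        = ∑ i, p i * (if i = s0.1 then (1:ℝ) else 0) := by exact_mod_cast echain.symm
    have hps' : ∑ i, p i * (if i = s0.1 then (1:ℝ) else 0) = 0 := by
      simp only [mul_ite, mul_one, mul_zero, Finset.sum_ite_eq', Finset.mem_univ, if_true]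
      exact hps
    rw [hps'] at hre
    have hnn : ∀ k s, 0 ≤ r k * (if (s : n × m).1 = s0.1 then (1:ℝ) else 0) * c k s := by
      intro k s
      refine mul_nonneg (mul_nonneg (hr0 k) ?_) (hc0 k s)
      split <;> norm_num
    have h1 := (Finset.sum_eq_zero_iff_of_nonneg
      (fun k _ => Finset.sum_nonneg fun s _ => hnn k s)).mp hre k0 (Finset.mem_univ _)
    have h2 := (Finset.sum_eq_zero_iff_of_nonneg (fun s _ => hnn k0 s)).mp h1 s0
      (Finset.mem_univ _)
    simpa using h2
  have hsupp2 : ∀ k s, q s.2 = 0 → r k * c k s = 0 := by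
    intro k0 s0 hqs
    have e3 := aux_kron_diag_right U₁ U₂ hU1u'
      (fun j => ((if j = s0.2 then (1:ℝ) else 0 : ℝ) : ℂ))
    have e4 := aux_trace_mul_one_kron ρ₁₂
      (U₂ * diagonal (fun j => ((if j = s0.2 then (1:ℝ) else 0 : ℝ) : ℂ)) * star U₂)
    have echain : ((∑ j, q j * (if j = s0.2 then (1:ℝ) else 0) : ℝ) : ℂ)
        = ((∑ k, ∑ s, r k * (if s.2 = s0.2 then (1:ℝ) else 0) * c k s : ℝ) : ℂ) := by
      rw [← hkey2 (fun j => if j = s0.2 then (1:ℝ) else 0), ← e4, e3,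
        keyf (fun s => if s.2 = s0.2 then (1:ℝ) else 0)]
    have hre : ∑ k, ∑ s, r k * (if s.2 = s0.2 then (1:ℝ) else 0) * c k s
        = ∑ j, q j * (if j = s0.2 then (1:ℝ) else 0) := by exact_mod_cast echain.symm
    have hqs' : ∑ j, q j * (if j = s0.2 then (1:ℝ) else 0) = 0 := by
      simp only [mul_ite, mul_one, mul_zero, Finset.sum_ite_eq', Finset.mem_univ, if_true]
      exact hqs
    rw [hqs'] at hre
    have hnn : ∀ k s, 0 ≤ r k * (if (s : n × m).2 = s0.2 then (1:ℝ) else 0) * c k s := by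
      intro k s
      refine mul_nonneg (mul_nonneg (hr0 k) ?_) (hc0 k s)
      split <;> norm_num
    have h1 := (Finset.sum_eq_zero_iff_of_nonneg
      (fun k _ => Finset.sum_nonneg fun s _ => hnn k s)).mp hre k0 (Finset.mem_univ _)
    have h2 := (Finset.sum_eq_zero_iff_of_nonneg (fun s _ => hnn k0 s)).mp h1 s0
      (Finset.mem_univ _)
    simpa using h2
  -- square roots
  have hms : msqrt ρ₁₂ = U * diagonal (fun k => ((Real.sqrt (r k) : ℝ) : ℂ)) * star U := by
    unfold msqrt
    rw [dif_pos hρ]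
    exact hρsqrt
  have hB : ((U₁ ⊗ₖ U₂) * diagonal (fun s : n × m => ((Real.sqrt (p s.1 * q s.2) : ℝ) : ℂ))
      * star (U₁ ⊗ₖ U₂)).PosSemidef :=
    aux_psd_conj _ _ (fun s => Real.sqrt_nonneg _)
  have hB2 : ((U₁ ⊗ₖ U₂) * diagonal (fun s : n × m => ((Real.sqrt (p s.1 * q s.2) : ℝ) : ℂ))
      * star (U₁ ⊗ₖ U₂)) ^ 2 = ptrace₂ ρ₁₂ ⊗ₖ ptrace₁ ρ₁₂ := by
    have hdd : (fun s : n × m => ((Real.sqrt (p s.1 * q s.2) : ℝ) : ℂ)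
          * ((Real.sqrt (p s.1 * q s.2) : ℝ) : ℂ))
        = fun s : n × m => ((p s.1 * q s.2 : ℝ) : ℂ) := by
      funext s
      rw [← Complex.ofReal_mul, Real.mul_self_sqrt (mul_nonneg (hp0 s.1) (hq0 s.2))]
    rw [pow_two, aux_conj_mul_conj _ hVu, hdd]
    exact hσspec.symm
  have hmsσ : msqrt (ptrace₂ ρ₁₂ ⊗ₖ ptrace₁ ρ₁₂)
      = (U₁ ⊗ₖ U₂) * diagonal (fun s : n × m => ((Real.sqrt (p s.1 * q s.2) : ℝ) : ℂ))
        * star (U₁ ⊗ₖ U₂) := by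
    have hσ1 : msqrt (ptrace₂ ρ₁₂ ⊗ₖ ptrace₁ ρ₁₂) = cfc Real.sqrt (ptrace₂ ρ₁₂ ⊗ₖ ptrace₁ ρ₁₂) := by
      unfold msqrt
      rw [dif_pos hσ, hσ.1.cfc_eq]
      rfl
    open scoped MatrixOrder in
    rw [hσ1, ← cfcₙ_eq_cfc, ← CFC.sqrt_eq_real_sqrt _ hσ.nonneg, ← hB2, CFC.sqrt_sq _ hB.nonneg]
  have hXYtr : (msqrt ρ₁₂ * msqrt (ptrace₂ ρ₁₂ ⊗ₖ ptrace₁ ρ₁₂)).trace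
      = ((∑ k, ∑ s, Real.sqrt (r k) * Real.sqrt (p s.1 * q s.2) * c k s : ℝ) : ℂ) := by
    rw [hms, hmsσ]
    exact aux_key U (U₁ ⊗ₖ U₂) (fun k => Real.sqrt (r k))
      (fun s => Real.sqrt (p s.1 * q s.2))
  have hXX : msqrt ρ₁₂ * msqrt ρ₁₂ = ρ₁₂ := by
    have hdd : (fun k => ((Real.sqrt (r k) : ℝ) : ℂ) * ((Real.sqrt (r k) : ℝ) : ℂ))
        = fun k => ((r k : ℝ) : ℂ) := by
      funext k
      rw [← Complex.ofReal_mul, Real.mul_self_sqrt (hr0 k)]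
    rw [hms, aux_conj_mul_conj U hUu, hdd]
    exact hρspec.symm
  have hYY : msqrt (ptrace₂ ρ₁₂ ⊗ₖ ptrace₁ ρ₁₂) * msqrt (ptrace₂ ρ₁₂ ⊗ₖ ptrace₁ ρ₁₂)
      = ptrace₂ ρ₁₂ ⊗ₖ ptrace₁ ρ₁₂ := by
    rw [hmsσ, ← pow_two, hB2]
  have hσtr : (ptrace₂ ρ₁₂ ⊗ₖ ptrace₁ ρ₁₂).trace = 1 := by
    rw [Matrix.trace_kronecker, htr1, htr2, mul_one]
  have hexpand : ((msqrt ρ₁₂ - msqrt (ptrace₂ ρ₁₂ ⊗ₖ ptrace₁ ρ₁₂)) ^ 2).trace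
      = 2 - 2 * ((∑ k, ∑ s, Real.sqrt (r k) * Real.sqrt (p s.1 * q s.2) * c k s : ℝ) : ℂ) := by
    have hsq : (msqrt ρ₁₂ - msqrt (ptrace₂ ρ₁₂ ⊗ₖ ptrace₁ ρ₁₂)) ^ 2
        = msqrt ρ₁₂ * msqrt ρ₁₂ - msqrt ρ₁₂ * msqrt (ptrace₂ ρ₁₂ ⊗ₖ ptrace₁ ρ₁₂)
          - (msqrt (ptrace₂ ρ₁₂ ⊗ₖ ptrace₁ ρ₁₂) * msqrt ρ₁₂
            - msqrt (ptrace₂ ρ₁₂ ⊗ₖ ptrace₁ ρ₁₂) * msqrt (ptrace₂ ρ₁₂ ⊗ₖ ptrace₁ ρ₁₂)) := by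
      rw [pow_two, sub_mul, mul_sub, mul_sub]
    rw [hsq, Matrix.trace_sub, Matrix.trace_sub, Matrix.trace_sub, hXX, hYY,
      Matrix.trace_mul_comm (msqrt (ptrace₂ ρ₁₂ ⊗ₖ ptrace₁ ρ₁₂)) (msqrt ρ₁₂),
      hXYtr, htr, hσtr]
    ring
  have harg : 1 - (1/2) *
      (((msqrt ρ₁₂ - msqrt (ptrace₂ ρ₁₂ ⊗ₖ ptrace₁ ρ₁₂)) ^ 2).trace.re)
      = ∑ k, ∑ s, Real.sqrt (r k) * Real.sqrt (p s.1 * q s.2) * c k s := by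
    rw [hexpand]
    have : ((2 : ℂ) - 2 * ((∑ k, ∑ s, Real.sqrt (r k) * Real.sqrt (p s.1 * q s.2) * c k s : ℝ) : ℂ))
        = (((2 - 2 * (∑ k, ∑ s, Real.sqrt (r k) * Real.sqrt (p s.1 * q s.2) * c k s) : ℝ)) : ℂ) := by
      push_cast
      ring
    rw [this, Complex.ofReal_re]
    ring
  -- final inequality
  rw [harg, hent0, hent1, hent2, hS1, hS2, hSρ]
  have hfin := aux_final r (fun s : n × m => p s.1) (fun s : n × m => q s.2) c
    hr0 (fun s => hp0 s.1) (fun s => hq0 s.2) hc0 hw1 hsupp1 hsupp2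
  linarith
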